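/- For the complete bipartite graph K_{d,n} (with d, n ≥ 1), the recession connectivity satisfies λ(K_{d,n}) = min{d, n}. -/

import Mathlib

/-! Scaffolding for bipartite graphs given by edge sets `B : Finset (L × R)`,
their recession graphs, and the recession connectivity `λ`. -/

variable {L R : Type*}

/-- The undirected simple graph on `L ⊕ R` determined by an edge set `S ⊆ L × R`. -/
def sgraph (S : Finset (L × R)) : SimpleGraph (L ⊕ R) where
  Adj v w := (∃ e ∈ S, v = Sum.inl e.1 ∧ w = Sum.inr e.2) ∨
             (∃ e ∈ S, w = Sum.inl e.1 ∧ v = Sum.inr e.2)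
  symm := by
    refine ⟨?_⟩
    rintro v w (⟨e, he, h1, h2⟩ | ⟨e, he, h1, h2⟩)
    · exact Or.inr ⟨e, he, h1, h2⟩
    · exact Or.inl ⟨e, he, h1, h2⟩
  loopless := by
    refine ⟨?_⟩
    rintro v (⟨e, _, h1, h2⟩ | ⟨e, _, h1, h2⟩) <;> subst h1 <;> simp_all

/-- A vertex is incident to the edge set `B` if it is an endpoint of one of its edges. -/
def incid (B : Finset (L × R)) (v : L ⊕ R) : Prop :=
  ∃ e ∈ B, v = Sum.inl e.1 ∨ v = Sum.inr e.2

/-- The arcs of the recession graph `R(S; B)`: every edge of `B` gives an arc from its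
`L`-endpoint to its `R`-endpoint, and every edge of `S` additionally gives the reverse arc. -/
def recArc (S B : Finset (L × R)) (v w : L ⊕ R) : Prop :=
  (∃ e ∈ B, v = Sum.inl e.1 ∧ w = Sum.inr e.2) ∨
  (∃ e ∈ S, w = Sum.inl e.1 ∧ v = Sum.inr e.2)

/-- The recession graph `R(S; B)` is strongly connected: every vertex of `B` reaches
every other vertex of `B` by a directed path. -/
def RecStrong (S B : Finset (L × R)) : Prop :=
  ∀ v w, incid B v → incid B w → Relation.ReflTransGen (recArc S B) v w

/-- The number of connected components of (the graph of) `S` containing at least one edge. -/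
noncomputable def numComp (S : Finset (L × R)) : ℕ :=
  Set.ncard {C : (sgraph S).ConnectedComponent |
    ∃ e ∈ S, C = (sgraph S).connectedComponentMk (Sum.inl e.1)}

/-- The recession connectivity `λ(B)`:  the maximum number of connected components of a
subgraph `S ⊆ B` for which the recession graph `R(S; B)` is strongly connected. -/
noncomputable def recConn (B : Finset (L × R)) : ℕ :=
  sSup {m | ∃ S ⊆ B, RecStrong S B ∧ numComp S = m}

/-- The graph of the edge set `B` is connected (on its own vertex set). -/
def ConnectedOn (B : Finset (L × R)) : Prop :=
  B.Nonempty ∧ ∀ v w, incid B v → incid B w → (sgraph B).Reachable v w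

section Aux

open SimpleGraph Relation

variable {d n : ℕ}

/-- Upper bound: any subgraph has at most `min d n` edge-containing components. -/
lemma numComp_le_min (hd : 1 ≤ d) (hn : 1 ≤ n) (S : Finset (Fin d × Fin n)) :
    numComp S ≤ min d n := by
  classical
  have hdne : Nonempty (Fin d) := ⟨⟨0, hd⟩⟩
  have hnne : Nonempty (Fin n) := ⟨⟨0, hn⟩⟩
  set T : Set ((sgraph S).ConnectedComponent) :=
    {C | ∃ e ∈ S, C = (sgraph S).connectedComponentMk (Sum.inl e.1)} with hT
  have key : ∀ C ∈ T, ∃ e ∈ S, C = (sgraph S).connectedComponentMk (Sum.inl e.1) := fun C h => h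
  -- choice function
  have hle1 : T.ncard ≤ d := by
    have := Set.ncard_le_ncard_of_injOn (s := T)
      (f := fun C : (sgraph S).ConnectedComponent =>
        if h : ∃ e ∈ S, C = (sgraph S).connectedComponentMk (Sum.inl e.1)
        then h.choose.1 else Classical.arbitrary (Fin d))
      (fun C _ => Set.mem_univ _)
      (by
        intro C hC C' hC' hf
        simp only [hT, Set.mem_setOf_eq] at hC hC'
        dsimp only at hf
        rw [dif_pos hC, dif_pos hC'] at hf
        obtain ⟨_, h2⟩ := hC.choose_spec
        obtain ⟨_, h2'⟩ := hC'.choose_spec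
        rw [h2, h2', hf])
      Set.finite_univ
    simpa [Set.ncard_univ] using this
  have hle2 : T.ncard ≤ n := by
    have := Set.ncard_le_ncard_of_injOn (s := T)
      (f := fun C : (sgraph S).ConnectedComponent =>
        if h : ∃ e ∈ S, C = (sgraph S).connectedComponentMk (Sum.inl e.1)
        then h.choose.2 else Classical.arbitrary (Fin n))
      (fun C _ => Set.mem_univ _)
      (by
        intro C hC C' hC' hf
        simp only [hT, Set.mem_setOf_eq] at hC hC'
        dsimp only at hf
        rw [dif_pos hC, dif_pos hC'] at hf
        obtain ⟨h1, h2⟩ := hC.choose_spec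
        obtain ⟨h1', h2'⟩ := hC'.choose_spec
        have e1 : (sgraph S).Adj (Sum.inl hC.choose.1) (Sum.inr hC.choose.2) :=
          Or.inl ⟨hC.choose, h1, rfl, rfl⟩
        have e1' : (sgraph S).Adj (Sum.inl hC'.choose.1) (Sum.inr hC'.choose.2) :=
          Or.inl ⟨hC'.choose, h1', rfl, rfl⟩
        rw [h2, h2', ConnectedComponent.connectedComponentMk_eq_of_adj e1, ConnectedComponent.connectedComponentMk_eq_of_adj e1', hf])
      Set.finite_univ
    simpa [Set.ncard_univ] using this
  exact le_min hle1 hle2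

end Aux

section Lower

open SimpleGraph Relation

variable {d n : ℕ}

lemma exists_good (hd : 1 ≤ d) (hn : 1 ≤ n) :
    ∃ S ⊆ (Finset.univ : Finset (Fin d × Fin n)),
      RecStrong S Finset.univ ∧ numComp S = min d n := by
  classical
  set m := min d n with hm
  have hm1 : 1 ≤ m := le_min hd hn
  set k := m - 1 with hk
  have hkm : k < m := Nat.sub_lt hm1 one_pos
  have hkd : k < d := lt_of_lt_of_le hkm (min_le_left d n)
  have hkn : k < n := lt_of_lt_of_le hkm (min_le_right d n)
  set S : Finset (Fin d × Fin n) :=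
    Finset.univ.filter (fun p => min p.1.1 k = min p.2.1 k) with hS
  have memS : ∀ p : Fin d × Fin n, p ∈ S ↔ min p.1.1 k = min p.2.1 k := by
    intro p; simp [hS]
  refine ⟨S, Finset.subset_univ S, ?_, ?_⟩
  · -- RecStrong
    have stepLR : ∀ (a : Fin d) (b : Fin n),
        recArc S Finset.univ (Sum.inl a) (Sum.inr b) :=
      fun a b => Or.inl ⟨(a, b), Finset.mem_univ _, rfl, rfl⟩
    have stepRL : ∀ (a : Fin d) (b : Fin n), (a, b) ∈ S →
        recArc S Finset.univ (Sum.inr b) (Sum.inl a) :=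
      fun a b h => Or.inr ⟨(a, b), h, rfl, rfl⟩
    have covL : ∀ a : Fin d, (a, (⟨min a.1 k, lt_of_le_of_lt (min_le_right _ _) hkn⟩ : Fin n)) ∈ S := by
      intro a; rw [memS]; show min a.1 k = min (min a.1 k) k; omega
    have covR : ∀ b : Fin n, ((⟨min b.1 k, lt_of_le_of_lt (min_le_right _ _) hkd⟩ : Fin d), b) ∈ S := by
      intro b; rw [memS]; show min (min b.1 k) k = min b.1 k; omega
    intro v w _ _
    match v, w with
    | Sum.inl a, Sum.inl a' =>
        exact ReflTransGen.head (stepLR a _) (ReflTransGen.head (stepRL a' _ (covL a')) .refl)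
    | Sum.inl a, Sum.inr b =>
        exact ReflTransGen.head (stepLR a b) .refl
    | Sum.inr b, Sum.inl a =>
        exact ReflTransGen.head (stepRL _ b (covR b))
          (ReflTransGen.head (stepLR _ _) (ReflTransGen.head (stepRL a _ (covL a)) .refl))
    | Sum.inr b, Sum.inr b' =>
        exact ReflTransGen.head (stepRL _ b (covR b)) (ReflTransGen.head (stepLR _ b') .refl)
  · -- numComp = m
    have inv_adj : ∀ v w, (sgraph S).Adj v w →
        min (Sum.elim Fin.val Fin.val v) k = min (Sum.elim Fin.val Fin.val w) k := by
      rintro v w (⟨e, he, rfl, rfl⟩ | ⟨e, he, rfl, rfl⟩) <;>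
        simp only [Sum.elim_inl, Sum.elim_inr]
      · exact (memS e).mp he
      · exact ((memS e).mp he).symm
    have inv_reach : ∀ v w, (sgraph S).Reachable v w →
        min (Sum.elim Fin.val Fin.val v) k = min (Sum.elim Fin.val Fin.val w) k := by
      intro v w h
      rw [reachable_iff_reflTransGen] at h
      induction h with
      | refl => rfl
      | tail _ hadj ih => exact ih.trans (inv_adj _ _ hadj)
    set φ : Fin m → (sgraph S).ConnectedComponent :=
      fun j => (sgraph S).connectedComponentMk
        (Sum.inl (⟨j.1, lt_of_lt_of_le j.2 (min_le_left d n)⟩ : Fin d)) with hφ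
    have hinj : Function.Injective φ := by
      intro j j' h
      have h2 := inv_reach _ _ (ConnectedComponent.eq.mp h)
      simp only [Sum.elim_inl] at h2
      have hj := j.2
      have hj' := j'.2
      exact Fin.ext (by omega)
    have hset : {C : (sgraph S).ConnectedComponent |
        ∃ e ∈ S, C = (sgraph S).connectedComponentMk (Sum.inl e.1)} = Set.range φ := by
      ext C
      constructor
      · rintro ⟨e, he, rfl⟩
        refine ⟨⟨min e.1.1 k, lt_of_le_of_lt (min_le_right _ _) hkm⟩, ?_⟩
        rw [hφ]
        apply ConnectedComponent.eq.mpr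
        have hb : min e.1.1 k < n := lt_of_le_of_lt (min_le_right _ _) hkn
        have adj1 : (sgraph S).Adj (Sum.inl (⟨min e.1.1 k, lt_of_le_of_lt (min_le_right _ _) hkd⟩ : Fin d))
            (Sum.inr (⟨min e.1.1 k, hb⟩ : Fin n)) := by
          refine Or.inl ⟨(⟨min e.1.1 k, lt_of_le_of_lt (min_le_right _ _) hkd⟩, ⟨min e.1.1 k, hb⟩), ?_, rfl, rfl⟩
          rw [memS]
        have adj2 : (sgraph S).Adj (Sum.inl e.1) (Sum.inr (⟨min e.1.1 k, hb⟩ : Fin n)) := by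
          refine Or.inl ⟨(e.1, ⟨min e.1.1 k, hb⟩), ?_, rfl, rfl⟩
          rw [memS]; show min e.1.1 k = min (min e.1.1 k) k; omega
        exact adj1.reachable.trans adj2.reachable.symm
      · rintro ⟨j, rfl⟩
        refine ⟨(⟨j.1, lt_of_lt_of_le j.2 (min_le_left d n)⟩,
          ⟨j.1, lt_of_lt_of_le j.2 (min_le_right d n)⟩), ?_, rfl⟩
        rw [memS]
    rw [numComp, hset, ← Set.image_univ, Set.ncard_image_of_injective _ hinj, Set.ncard_univ]
    simp

end Lower

/-- For the complete bipartite graph `K_{d,n}` (with `d, n ≥ 1`) the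
recession connectivity satisfies `λ(K_{d,n}) = min d n`. -/
theorem recConn_completeBipartite (d n : ℕ) (hd : 1 ≤ d) (hn : 1 ≤ n) :
    recConn (Finset.univ : Finset (Fin d × Fin n)) = min d n := by
  obtain ⟨S, hSsub, hstrong, hnum⟩ := exists_good hd hn
  have hub : ∀ x ∈ {m | ∃ S ⊆ (Finset.univ : Finset (Fin d × Fin n)),
      RecStrong S Finset.univ ∧ numComp S = m}, x ≤ min d n := by
    rintro x ⟨S', _, _, rfl⟩
    exact numComp_le_min hd hn S'
  have hmem : min d n ∈ {m | ∃ S ⊆ (Finset.univ : Finset (Fin d × Fin n)),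
      RecStrong S Finset.univ ∧ numComp S = m} := ⟨S, hSsub, hstrong, hnum⟩
  unfold recConn
  exact le_antisymm (csSup_le ⟨_, hmem⟩ hub) (le_csSup ⟨_, hub⟩ hmem)
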